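/- Classical privacy amplification (leftover hash lemma with side information): Let 𝓕 be a two-universal family of hash functions from {0,1}^n to {0,1}^ℓ, let F be uniform on 𝓕 and independent of the finite random variables (X, Y). Then d(F(X) | F, Y) <= (1/2) · 2^{-(H_min(X|Y) - ℓ)/2}, where d denotes the non-uniformity (half the statistical distance from uniform on {0,1}^ℓ jointly with the side information). -/

import Mathlib

open Finset Real

lemma pa_l1_le_sqrt {ι : Type*} [Fintype ι] (a : ι → ℝ) :
    ∑ i, |a i| ≤ Real.sqrt ((Fintype.card ι : ℝ) * ∑ i, (a i) ^ 2) := by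
  have h := Finset.sum_mul_sq_le_sq_mul_sq Finset.univ (fun _ : ι => (1:ℝ)) (fun i => |a i|)
  simp only [one_mul, one_pow, Finset.sum_const, nsmul_eq_mul, mul_one, sq_abs] at h
  have h0 : 0 ≤ ∑ i, |a i| := Finset.sum_nonneg fun i _ => abs_nonneg _
  rw [show (Finset.univ.card : ℝ) = (Fintype.card ι : ℝ) from rfl] at h
  calc ∑ i, |a i| = Real.sqrt ((∑ i, |a i|) ^ 2) := by rw [Real.sqrt_sq h0]
    _ ≤ _ := Real.sqrt_le_sqrt h

lemma pa_sum_sqrt_le {ι : Type*} [Fintype ι] (a : ι → ℝ) (ha : ∀ i, 0 ≤ a i) :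
    ∑ i, Real.sqrt (a i) ≤ Real.sqrt ((Fintype.card ι : ℝ) * ∑ i, a i) := by
  have h := pa_l1_le_sqrt (fun i => Real.sqrt (a i))
  simp only [abs_of_nonneg (Real.sqrt_nonneg _), Real.sq_sqrt (ha _)] at h
  exact h

lemma pa_cs_weights {ι : Type*} [Fintype ι] (a b : ι → ℝ) (ha : ∀ i, 0 ≤ a i)
    (hb : ∀ i, 0 ≤ b i) :
    ∑ i, Real.sqrt (a i * b i) ≤ Real.sqrt (∑ i, a i) * Real.sqrt (∑ i, b i) := by
  have h := Finset.sum_mul_sq_le_sq_mul_sq Finset.univ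
      (fun i => Real.sqrt (a i)) (fun i => Real.sqrt (b i))
  simp only [Real.sq_sqrt (ha _), Real.sq_sqrt (hb _), ← Real.sqrt_mul (ha _)] at h
  have h0 : 0 ≤ ∑ i, Real.sqrt (a i * b i) := Finset.sum_nonneg fun i _ => Real.sqrt_nonneg _
  calc ∑ i, Real.sqrt (a i * b i) = Real.sqrt ((∑ i, Real.sqrt (a i * b i)) ^ 2) := by
        rw [Real.sqrt_sq h0]
    _ ≤ Real.sqrt ((∑ i, a i) * ∑ i, b i) := Real.sqrt_le_sqrt h
    _ = _ := Real.sqrt_mul (Finset.sum_nonneg fun i _ => ha i) _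

theorem privacy_amplification
    {Ω 𝒴 ℱ : Type} [Fintype Ω] [Fintype 𝒴] [Fintype ℱ]
    [DecidableEq 𝒴] [Nonempty ℱ]
    (n ℓ : ℕ)
    (μ : Ω → ℝ) (hμ0 : ∀ ω, 0 ≤ μ ω) (hμ1 : ∑ ω, μ ω = 1)
    (X : Ω → (Fin n → Bool)) (Y : Ω → 𝒴)
    (h : ℱ → (Fin n → Bool) → (Fin ℓ → Bool))
    -- two-universality of the family
    (huniv : ∀ x y : Fin n → Bool, x ≠ y →
      ((Finset.univ.filter (fun f : ℱ => h f x = h f y)).card : ℝ)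
          / (Fintype.card ℱ : ℝ)
        ≤ (2:ℝ) ^ (-(ℓ:ℝ))) :
    (1/2) * ∑ s : Fin ℓ → Bool, ∑ f : ℱ, ∑ y : 𝒴,
        |(∑ ω, if h f (X ω) = s ∧ Y ω = y then μ ω else 0) / (Fintype.card ℱ : ℝ)
          - (2:ℝ) ^ (-(ℓ:ℝ))
            * ((∑ ω, if Y ω = y then μ ω else 0) / (Fintype.card ℱ : ℝ))|
      ≤ (1/2) * (2:ℝ) ^
          (-((-Real.logb 2 (∑ y : 𝒴, Finset.univ.sup' Finset.univ_nonempty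
                (fun x : Fin n → Bool =>
                  ∑ ω, if X ω = x ∧ Y ω = y then μ ω else 0)))
              - (ℓ:ℝ)) / 2) := by
  classical
  let N : ℝ := (Fintype.card ℱ : ℝ)
  let c : ℝ := (2:ℝ) ^ (-(ℓ:ℝ))
  let p : (Fin n → Bool) → 𝒴 → ℝ := fun x y => ∑ ω, if X ω = x ∧ Y ω = y then μ ω else 0
  let m : 𝒴 → ℝ := fun y => Finset.univ.sup' Finset.univ_nonempty (fun x => p x y)
  let py : 𝒴 → ℝ := fun y => ∑ ω, if Y ω = y then μ ω else 0
  let q : ℱ → (Fin ℓ → Bool) → 𝒴 → ℝ :=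
    fun f s y => ∑ ω, if h f (X ω) = s ∧ Y ω = y then μ ω else 0
  let M : ℝ := ∑ y, m y
  show (1/2) * ∑ s : Fin ℓ → Bool, ∑ f : ℱ, ∑ y : 𝒴, |q f s y / N - c * (py y / N)|
      ≤ (1/2) * (2:ℝ) ^ (-((-Real.logb 2 M) - (ℓ:ℝ)) / 2)
  -- basic positivity facts
  have hN0 : (0:ℝ) < N := by
    show (0:ℝ) < (Fintype.card ℱ : ℝ)
    exact_mod_cast Fintype.card_pos
  have hc0 : (0:ℝ) ≤ c := le_of_lt (Real.rpow_pos_of_pos (by norm_num) _)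
  have hp0 : ∀ x y, 0 ≤ p x y := by
    intro x y
    exact Finset.sum_nonneg fun ω _ => by split_ifs; exacts [hμ0 ω, le_rfl]
  have hm : ∀ x y, p x y ≤ m y := fun x y => Finset.le_sup' (fun x => p x y) (mem_univ x)
  have hm0 : ∀ y, 0 ≤ m y := fun y => le_trans (hp0 (fun _ => false) y) (hm _ y)
  have hpy : ∀ y, py y = ∑ x, p x y := by
    intro y
    show (∑ ω, if Y ω = y then μ ω else 0)
        = ∑ x, ∑ ω, if X ω = x ∧ Y ω = y then μ ω else 0
    rw [Finset.sum_comm]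
    refine Finset.sum_congr rfl fun ω _ => ?_
    symm
    simp_rw [ite_and]
    rw [Finset.sum_ite_eq]
    simp
  have hpy0 : ∀ y, 0 ≤ py y := by
    intro y
    rw [hpy]
    exact Finset.sum_nonneg fun x _ => hp0 x y
  have hpysum : ∑ y, py y = 1 := by
    show (∑ y, ∑ ω, if Y ω = y then μ ω else 0) = 1
    rw [Finset.sum_comm, ← hμ1]
    refine Finset.sum_congr rfl fun ω _ => ?_
    rw [Finset.sum_ite_eq]
    simp
  have hq : ∀ f s y, q f s y = ∑ x, if h f x = s then p x y else 0 := by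
    intro f s y
    show (∑ ω, if h f (X ω) = s ∧ Y ω = y then μ ω else 0) = _
    have step : ∀ x : Fin n → Bool, (if h f x = s then p x y else 0)
        = ∑ ω, if h f x = s then (if X ω = x ∧ Y ω = y then μ ω else 0) else 0 := by
      intro x
      split_ifs with hcnd
      · rfl
      · simp
    rw [Finset.sum_congr rfl (fun x _ => step x), Finset.sum_comm]
    refine Finset.sum_congr rfl fun ω _ => ?_
    symm
    have point : ∀ x : Fin n → Bool,
        (if h f x = s then (if X ω = x ∧ Y ω = y then μ ω else 0) else 0)
        = if X ω = x then (if h f (X ω) = s ∧ Y ω = y then μ ω else 0) else 0 := by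
      intro x
      by_cases hx : X ω = x
      · subst hx
        split_ifs <;> tauto
      · simp [hx]
    rw [Finset.sum_congr rfl (fun x _ => point x), Finset.sum_ite_eq]
    simp
  have hcardS : (Fintype.card (Fin ℓ → Bool) : ℝ) = (2:ℝ)^ℓ := by
    simp [Fintype.card_fun]
  have hc1 : (2:ℝ)^ℓ * c = 1 := by
    show (2:ℝ)^ℓ * (2:ℝ)^(-(ℓ:ℝ)) = 1
    rw [← Real.rpow_natCast 2 ℓ, ← Real.rpow_add (by norm_num : (0:ℝ) < 2)]
    simp
  -- the collision-counting crux
  have crux : ∀ y, ∑ f, ∑ s : Fin ℓ → Bool, (q f s y - c * py y)^2 ≤ N * (m y * py y) := by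
    intro y
    -- expand the square
    have hsum_q : ∀ f, ∑ s : Fin ℓ → Bool, q f s y = py y := by
      intro f
      simp_rw [hq]
      rw [Finset.sum_comm, hpy y]
      refine Finset.sum_congr rfl fun x _ => ?_
      rw [Finset.sum_ite_eq]
      simp
    have expand : ∀ f, ∑ s : Fin ℓ → Bool, (q f s y - c * py y)^2
        = (∑ s : Fin ℓ → Bool, (q f s y)^2) - c * (py y)^2 := by
      intro f
      have e1 : ∀ s : Fin ℓ → Bool, (q f s y - c * py y)^2
          = (q f s y)^2 - (2*c*py y) * q f s y + c^2*(py y)^2 := fun s => by ring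
      rw [Finset.sum_congr rfl fun s _ => e1 s, Finset.sum_add_distrib,
        Finset.sum_sub_distrib, ← Finset.mul_sum, hsum_q, Finset.sum_const,
        nsmul_eq_mul, Finset.card_univ, hcardS]
      rw [show (2:ℝ)^ℓ * (c^2*(py y)^2) = ((2:ℝ)^ℓ*c)*(c*(py y)^2) by ring, hc1, one_mul]
      ring
    -- expand the collision sum
    have hAA : ∑ f, ∑ s : Fin ℓ → Bool, (q f s y)^2
        = ∑ x, ∑ x', ((Finset.univ.filter (fun f : ℱ => h f x' = h f x)).card : ℝ)
            * (p x y * p x' y) := by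
      have e2 : ∀ f, ∑ s : Fin ℓ → Bool, (q f s y)^2
          = ∑ x, ∑ x', (if h f x' = h f x then p x y * p x' y else 0) := by
        intro f
        simp_rw [hq, sq, Finset.sum_mul_sum]
        rw [Finset.sum_comm]
        refine Finset.sum_congr rfl fun x _ => ?_
        rw [Finset.sum_comm]
        refine Finset.sum_congr rfl fun x' _ => ?_
        simp only [ite_mul, zero_mul, mul_ite, mul_zero]
        rw [Finset.sum_ite_eq]
        simp only [mem_univ, if_true]
        exact if_congr eq_comm rfl rfl
      rw [Finset.sum_congr rfl fun f _ => e2 f, Finset.sum_comm]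
      refine Finset.sum_congr rfl fun x _ => ?_
      rw [Finset.sum_comm]
      refine Finset.sum_congr rfl fun x' _ => ?_
      rw [← Finset.sum_filter, Finset.sum_const, nsmul_eq_mul]
    -- bound the collision sum
    have coll_diag : ∀ x : Fin n → Bool,
        ((Finset.univ.filter (fun f : ℱ => h f x = h f x)).card : ℝ) = N := by
      intro x
      rw [Finset.filter_true_of_mem (fun f _ => rfl), Finset.card_univ]
    have coll_off : ∀ x x' : Fin n → Bool, x ≠ x' →
        ((Finset.univ.filter (fun f : ℱ => h f x' = h f x)).card : ℝ) ≤ N * c := by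
      intro x x' hne
      have := huniv x' x (fun e => hne e.symm)
      calc ((Finset.univ.filter (fun f : ℱ => h f x' = h f x)).card : ℝ)
          = ((Finset.univ.filter (fun f : ℱ => h f x' = h f x)).card : ℝ) / N * N := by
            field_simp
        _ ≤ c * N := by
            exact mul_le_mul_of_nonneg_right this hN0.le
        _ = N * c := mul_comm _ _
    have inner_bd : ∀ x, ∑ x', ((Finset.univ.filter (fun f : ℱ => h f x' = h f x)).card : ℝ)
            * (p x y * p x' y)
        ≤ N * (p x y)^2 + N * c * (p x y * py y) := by
      intro x
      rw [← Finset.add_sum_erase _ _ (mem_univ x)]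
      have t1 : ((Finset.univ.filter (fun f : ℱ => h f x = h f x)).card : ℝ)
          * (p x y * p x y) = N * (p x y)^2 := by
        rw [coll_diag x]; ring
      have t2 : ∑ x' ∈ Finset.univ.erase x,
            ((Finset.univ.filter (fun f : ℱ => h f x' = h f x)).card : ℝ) * (p x y * p x' y)
          ≤ N * c * (p x y * py y) := by
        calc ∑ x' ∈ Finset.univ.erase x,
              ((Finset.univ.filter (fun f : ℱ => h f x' = h f x)).card : ℝ) * (p x y * p x' y)
            ≤ ∑ x' ∈ Finset.univ.erase x, (N * c) * (p x y * p x' y) := by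
              refine Finset.sum_le_sum fun x' hx' => ?_
              have hne : x ≠ x' := fun e => (Finset.mem_erase.mp hx').1 e.symm
              exact mul_le_mul_of_nonneg_right (coll_off x x' hne)
                (mul_nonneg (hp0 x y) (hp0 x' y))
          _ ≤ ∑ x', (N * c) * (p x y * p x' y) := by
              refine Finset.sum_le_sum_of_subset_of_nonneg (Finset.erase_subset _ _)
                fun x' _ _ => ?_
              exact mul_nonneg (by positivity) (mul_nonneg (hp0 x y) (hp0 x' y))
          _ = N * c * (p x y * py y) := by
              rw [← Finset.mul_sum, ← Finset.mul_sum, hpy y]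
      rw [t1]
      exact add_le_add_right t2 _
    have sum_p_sq : ∑ x, (p x y)^2 ≤ m y * py y := by
      calc ∑ x, (p x y)^2 ≤ ∑ x, m y * p x y := by
            refine Finset.sum_le_sum fun x _ => ?_
            rw [sq]
            exact mul_le_mul_of_nonneg_right (hm x y) (hp0 x y)
        _ = m y * py y := by rw [← Finset.mul_sum, hpy y]
    calc ∑ f, ∑ s : Fin ℓ → Bool, (q f s y - c * py y)^2
        = (∑ f, ∑ s : Fin ℓ → Bool, (q f s y)^2) - N * (c * (py y)^2) := by
          rw [Finset.sum_congr rfl fun f _ => expand f, Finset.sum_sub_distrib,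
            Finset.sum_const, nsmul_eq_mul, Finset.card_univ]
      _ ≤ (N * (m y * py y) + N * c * (py y)^2) - N * (c * (py y)^2) := by
          have : ∑ f, ∑ s : Fin ℓ → Bool, (q f s y)^2
              ≤ N * (m y * py y) + N * c * (py y)^2 := by
            rw [hAA]
            calc ∑ x, ∑ x', ((Finset.univ.filter (fun f : ℱ => h f x' = h f x)).card : ℝ)
                  * (p x y * p x' y)
                ≤ ∑ x, (N * (p x y)^2 + N * c * (p x y * py y)) :=
                  Finset.sum_le_sum fun x _ => inner_bd x
              _ = N * (∑ x, (p x y)^2) + N * c * (py y * py y) := by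
                  rw [Finset.sum_add_distrib, ← Finset.mul_sum, ← Finset.mul_sum]
                  congr 1
                  rw [show (∑ x, p x y * py y) = (∑ x, p x y) * py y from
                    (Finset.sum_mul _ _ _).symm, ← hpy y]
              _ ≤ N * (m y * py y) + N * c * (py y)^2 := by
                  rw [sq]
                  exact add_le_add (mul_le_mul_of_nonneg_left sum_p_sq hN0.le) le_rfl
          linarith
      _ = N * (m y * py y) := by ring
  -- per-y l¹ bound
  have step1 : ∀ y, ∑ f, ∑ s : Fin ℓ → Bool, |q f s y - c * py y|
      ≤ N * Real.sqrt ((2:ℝ)^ℓ * (m y * py y)) := by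
    intro y
    have nn : ∀ f : ℱ, 0 ≤ (2:ℝ)^ℓ * ∑ s : Fin ℓ → Bool, (q f s y - c * py y)^2 := by
      intro f
      have : 0 ≤ ∑ s : Fin ℓ → Bool, (q f s y - c * py y)^2 :=
        Finset.sum_nonneg fun s _ => sq_nonneg _
      positivity
    calc ∑ f, ∑ s : Fin ℓ → Bool, |q f s y - c * py y|
        ≤ ∑ f, Real.sqrt ((2:ℝ)^ℓ * ∑ s : Fin ℓ → Bool, (q f s y - c * py y)^2) := by
          refine Finset.sum_le_sum fun f _ => ?_
          have := pa_l1_le_sqrt (fun s : Fin ℓ → Bool => q f s y - c * py y)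
          rwa [hcardS] at this
      _ ≤ Real.sqrt (N * ∑ f, (2:ℝ)^ℓ * ∑ s : Fin ℓ → Bool, (q f s y - c * py y)^2) := by
          have := pa_sum_sqrt_le
            (fun f : ℱ => (2:ℝ)^ℓ * ∑ s : Fin ℓ → Bool, (q f s y - c * py y)^2) nn
          exact this
      _ ≤ Real.sqrt (N * ((2:ℝ)^ℓ * (N * (m y * py y)))) := by
          apply Real.sqrt_le_sqrt
          rw [← Finset.mul_sum]
          have h2 : (0:ℝ) ≤ (2:ℝ)^ℓ := by positivity
          exact mul_le_mul_of_nonneg_left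
            (mul_le_mul_of_nonneg_left (crux y) h2) hN0.le
      _ = N * Real.sqrt ((2:ℝ)^ℓ * (m y * py y)) := by
          rw [show N * ((2:ℝ)^ℓ * (N * (m y * py y))) = N^2 * ((2:ℝ)^ℓ * (m y * py y)) by
            ring, Real.sqrt_mul (sq_nonneg N), Real.sqrt_sq hN0.le]
  -- sum over y
  have key : ∑ y, ∑ f, ∑ s : Fin ℓ → Bool, |q f s y - c * py y|
      ≤ N * Real.sqrt ((2:ℝ)^ℓ * M) := by
    calc ∑ y, ∑ f, ∑ s : Fin ℓ → Bool, |q f s y - c * py y|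
        ≤ ∑ y, N * Real.sqrt ((2:ℝ)^ℓ * (m y * py y)) :=
          Finset.sum_le_sum fun y _ => step1 y
      _ = N * ∑ y, Real.sqrt (((2:ℝ)^ℓ * m y) * py y) := by
          rw [← Finset.mul_sum]
          congr 1
          exact Finset.sum_congr rfl fun y _ => by rw [mul_assoc]
      _ ≤ N * (Real.sqrt (∑ y, (2:ℝ)^ℓ * m y) * Real.sqrt (∑ y, py y)) := by
          refine mul_le_mul_of_nonneg_left ?_ hN0.le
          exact pa_cs_weights _ _ (fun y => by have := hm0 y; positivity) hpy0
      _ = N * Real.sqrt ((2:ℝ)^ℓ * M) := by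
          rw [hpysum, Real.sqrt_one, mul_one, ← Finset.mul_sum]
  -- the RHS identity
  have hM0 : 0 < M := by
    have h1 : ∀ y, py y ≤ (2^n : ℝ) * m y := by
      intro y
      rw [hpy]
      calc ∑ x, p x y ≤ ∑ x : Fin n → Bool, m y := Finset.sum_le_sum fun x _ => hm x y
        _ = ((Fintype.card (Fin n → Bool) : ℝ)) * m y := by
            rw [Finset.sum_const, nsmul_eq_mul, Finset.card_univ]
        _ = (2^n : ℝ) * m y := by norm_num [Fintype.card_fun]
    have h2 : (1:ℝ) ≤ 2^n * M := by
      rw [← hpysum]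
      calc ∑ y, py y ≤ ∑ y, (2^n : ℝ) * m y := Finset.sum_le_sum fun y _ => h1 y
        _ = (2^n : ℝ) * M := by rw [← Finset.mul_sum]
    by_contra hM
    push_neg at hM
    have : (2:ℝ)^n * M ≤ 0 :=
      mul_nonpos_iff.mpr (Or.inl ⟨by positivity, hM⟩)
    linarith
  have hRHS : (2:ℝ) ^ (-((-Real.logb 2 M) - (ℓ:ℝ)) / 2) = Real.sqrt ((2:ℝ)^ℓ * M) := by
    have e : (2:ℝ) ^ (-((-Real.logb 2 M) - (ℓ:ℝ)) / 2)
        = (2:ℝ)^((ℓ:ℝ)*(1/2)) * (2:ℝ)^(Real.logb 2 M * (1/2)) := by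
      rw [← Real.rpow_add (by norm_num : (0:ℝ) < 2)]
      congr 1
      ring
    rw [e, Real.rpow_mul (by norm_num : (0:ℝ) ≤ 2), Real.rpow_mul (by norm_num : (0:ℝ) ≤ 2),
      Real.rpow_logb (by norm_num) (by norm_num) hM0, Real.rpow_natCast,
      ← Real.sqrt_eq_rpow, ← Real.sqrt_eq_rpow,
      ← Real.sqrt_mul (by positivity : (0:ℝ) ≤ (2:ℝ)^ℓ)]
  -- put everything together
  have habs : ∀ (s : Fin ℓ → Bool) (f : ℱ) (y : 𝒴),
      |q f s y / N - c * (py y / N)| = |q f s y - c * py y| / N := by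
    intro s f y
    rw [mul_div_assoc', div_sub_div_same, abs_div, abs_of_pos hN0]
  have swap3 : ∑ s : Fin ℓ → Bool, ∑ f : ℱ, ∑ y : 𝒴, (|q f s y - c * py y| / N)
      = ∑ y : 𝒴, ∑ f : ℱ, ∑ s : Fin ℓ → Bool, (|q f s y - c * py y| / N) := by
    calc ∑ s : Fin ℓ → Bool, ∑ f : ℱ, ∑ y : 𝒴, (|q f s y - c * py y| / N)
        = ∑ s : Fin ℓ → Bool, ∑ y : 𝒴, ∑ f : ℱ, (|q f s y - c * py y| / N) :=
          Finset.sum_congr rfl fun s _ => Finset.sum_comm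
      _ = ∑ y : 𝒴, ∑ s : Fin ℓ → Bool, ∑ f : ℱ, (|q f s y - c * py y| / N) :=
          Finset.sum_comm
      _ = ∑ y : 𝒴, ∑ f : ℱ, ∑ s : Fin ℓ → Bool, (|q f s y - c * py y| / N) :=
          Finset.sum_congr rfl fun y _ => Finset.sum_comm
  calc (1/2) * ∑ s : Fin ℓ → Bool, ∑ f : ℱ, ∑ y : 𝒴, |q f s y / N - c * (py y / N)|
      = (1/2) * ∑ s : Fin ℓ → Bool, ∑ f : ℱ, ∑ y : 𝒴, (|q f s y - c * py y| / N) := by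
        congr 1
        exact Finset.sum_congr rfl fun s _ => Finset.sum_congr rfl fun f _ =>
          Finset.sum_congr rfl fun y _ => habs s f y
    _ = (1/2) * ∑ y : 𝒴, ∑ f : ℱ, ∑ s : Fin ℓ → Bool, (|q f s y - c * py y| / N) := by
        rw [swap3]
    _ = (1/2) * ((∑ y, ∑ f, ∑ s : Fin ℓ → Bool, |q f s y - c * py y|) / N) := by
        congr 1
        rw [Finset.sum_div]
        refine Finset.sum_congr rfl fun y _ => ?_
        rw [Finset.sum_div]
        refine Finset.sum_congr rfl fun f _ => ?_
        rw [Finset.sum_div]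
    _ ≤ (1/2) * ((N * Real.sqrt ((2:ℝ)^ℓ * M)) / N) := by
        gcongr
    _ = (1/2) * Real.sqrt ((2:ℝ)^ℓ * M) := by
        rw [mul_div_cancel_left₀ _ hN0.ne']
    _ = (1/2) * (2:ℝ) ^ (-((-Real.logb 2 M) - (ℓ:ℝ)) / 2) := by rw [hRHS]
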